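/- Let p be an odd prime and r, s, x, z, t positive integers with r > 1, x > z ≥ 2 and z an odd prime satisfying p ≡ 1 (mod 2z). If 2^r + p^s - 1 = 2^{rx} and ((2^r+p^s)^z - 1)/(2^r+p^s-1) = p^t, then a contradiction follows; i.e., there are no such integers. -/

import Mathlib

theorem stmt_11 (p r s x z t : ℕ) (hp : p.Prime) (hpodd : Odd p)
    (hr : 1 < r) (hs : 0 < s) (ht : 0 < t)
    (hz : z.Prime) (hzodd : Odd z) (hxz : x > z)
    (hpmod : p ≡ 1 [MOD 2 * z])
    (h1 : 2 ^ r + p ^ s - 1 = 2 ^ (r * x))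
    (h2 : ∑ i ∈ Finset.range z, (2 ^ r + p ^ s) ^ i = p ^ t) : False := by
  have hp1 : 1 < p := hp.one_lt
  have hz2 : 2 ≤ z := hz.two_le
  have h2r : 1 ≤ 2 ^ r := Nat.one_le_two_pow
  have e1 : 2 ^ r + p ^ s = 2 ^ (r * x) + 1 := by omega
  set S : ℕ := ∑ i ∈ Finset.range z, (2 ^ r) ^ i with hS
  -- s ≤ t
  have hlt : p ^ s < p ^ t := by
    calc p ^ s < 2 ^ r + p ^ s := by omega
    _ = (2 ^ r + p ^ s) ^ 1 := (pow_one _).symm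
    _ ≤ ∑ i ∈ Finset.range z, (2 ^ r + p ^ s) ^ i :=
        Finset.single_le_sum (fun i _ => Nat.zero_le _) (Finset.mem_range.mpr (by omega))
    _ = p ^ t := h2
  have hst : s ≤ t := le_of_lt ((Nat.pow_lt_pow_iff_right hp1).mp hlt)
  -- p^s divides S
  have hdvdZ : (p : ℤ) ^ s ∣ (S : ℤ) := by
    have hNd : (p : ℤ) ^ s ∣ ((2 ^ r + p ^ s : ℕ) : ℤ) - 2 ^ r := by
      push_cast; ring_nf; exact dvd_refl _
    have h3 : (p : ℤ) ^ s ∣ (∑ i ∈ Finset.range z, ((2 ^ r + p ^ s : ℕ) : ℤ) ^ i)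
        - ∑ i ∈ Finset.range z, ((2 : ℤ) ^ r) ^ i := by
      rw [← Finset.sum_sub_distrib]
      exact Finset.dvd_sum fun i _ => hNd.trans (sub_dvd_pow_sub_pow _ _ i)
    have h4 : (p : ℤ) ^ s ∣ ∑ i ∈ Finset.range z, ((2 ^ r + p ^ s : ℕ) : ℤ) ^ i := by
      have h2' : (∑ i ∈ Finset.range z, ((2 ^ r + p ^ s : ℕ) : ℤ) ^ i) = (p : ℤ) ^ t := by
        exact_mod_cast congrArg (fun n : ℕ => (n : ℤ)) h2
      rw [h2']; exact pow_dvd_pow _ hst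
    have := h4.sub h3
    simp only [sub_sub_cancel] at this
    convert this using 1
    · rfl
    push_cast [hS]
    ring
  have hdvd : p ^ s ∣ S := by exact_mod_cast hdvdZ
  -- S positive
  have hSpos : 0 < S := by
    have : (2 ^ r : ℕ) ^ 0 ≤ S :=
      Finset.single_le_sum (fun i _ => Nat.zero_le _) (Finset.mem_range.mpr (by omega))
    simpa using this.trans_lt' (by norm_num)
  have hps_le : p ^ s ≤ S := Nat.le_of_dvd hSpos hdvd
  -- S ≤ 2^(r*z)
  have hSle : S ≤ 2 ^ (r * z) := by
    have hg : (S : ℤ) * ((2 : ℤ) ^ r - 1) = 2 ^ (r * z) - 1 := by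
      push_cast [hS]
      rw [geom_sum_mul, ← pow_mul]
    have hfac : (1 : ℤ) ≤ (2 : ℤ) ^ r - 1 := by
      have : (2 : ℤ) ^ 1 ≤ 2 ^ r := pow_le_pow_right₀ (by norm_num) (by omega)
      simp at this; omega
    have : (S : ℤ) ≤ (S : ℤ) * ((2 : ℤ) ^ r - 1) :=
      le_mul_of_one_le_right (by positivity) hfac
    have h5 : (S : ℤ) ≤ ((2 ^ (r * z) : ℕ) : ℤ) := by push_cast; omega
    exact_mod_cast h5
  -- size comparison
  have hmul : r * z + 1 ≤ r * x := by
    have := Nat.mul_le_mul_left r (show z + 1 ≤ x from hxz)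
    rw [Nat.mul_add, mul_one] at this
    omega
  have hA : 2 ^ (r * z + 1) ≤ 2 ^ (r * x) := Nat.pow_le_pow_right (by norm_num) hmul
  have hB : 2 ^ r ≤ 2 ^ (r * z) := Nat.pow_le_pow_right (by norm_num) (by nlinarith)
  have hC : 2 ^ (r * z + 1) = 2 * 2 ^ (r * z) := by rw [pow_succ]; ring
  omega
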